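/- Let r be exponentially distributed with mean m, let g₁, g₂ ∼ N(0,1) be independent of r and of each other, let 0 < ρ < 1 and set ρ̄ = sqrt((1−ρ²)/2·m). Define r* = (ρ√r + ρ̄g₁)² + (ρ̄g₂)². Then E[r*] = E[r] = m and, for the case m = 2, Var(r*) = Var(r) = 4. -/

import Mathlib

open MeasureTheory ProbabilityTheory
open Real Set
open scoped NNReal ENNReal

section ExpPropAux

lemma integral_withDensity_ofReal {p : ℝ → ℝ} (hp : Measurable p) (hp0 : ∀ x, 0 ≤ p x)
    (f : ℝ → ℝ) :
    ∫ x, f x ∂((volume : Measure ℝ).withDensity fun x => ENNReal.ofReal (p x)) =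
      ∫ x, p x * f x := by
  rw [show (fun x => ENNReal.ofReal (p x)) = fun x => ((Real.toNNReal (p x) : ℝ≥0) : ℝ≥0∞)
    from rfl, integral_withDensity_eq_integral_smul hp.real_toNNReal f]
  refine integral_congr_ae (Filter.Eventually.of_forall fun x => ?_)
  simp [NNReal.smul_def, Real.coe_toNNReal _ (hp0 x)]

lemma integrable_withDensity_ofReal {p : ℝ → ℝ} (hp : Measurable p) (hp0 : ∀ x, 0 ≤ p x)
    {f : ℝ → ℝ} (hf : Integrable (fun x => p x * f x)) :
    Integrable f ((volume : Measure ℝ).withDensity fun x => ENNReal.ofReal (p x)) := by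
  rw [show (fun x => ENNReal.ofReal (p x)) = fun x => ((Real.toNNReal (p x) : ℝ≥0) : ℝ≥0∞)
    from rfl, integrable_withDensity_iff_integrable_smul hp.real_toNNReal]
  refine hf.congr (Filter.Eventually.of_forall fun x => ?_)
  simp [NNReal.smul_def, Real.coe_toNNReal _ (hp0 x)]

lemma exp_pdf_eq (x : ℝ) :
    gammaPDFReal 1 (1/2) x = if 0 ≤ x then 2⁻¹ * Real.exp (-(2⁻¹ * x)) else 0 := by
  simp only [gammaPDFReal, Real.rpow_one, Real.Gamma_one, sub_self, Real.rpow_zero]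
  norm_num

lemma exp_sqrt_moment (k : ℕ) :
    Integrable (fun x => Real.sqrt x ^ k) (expMeasure (1/2)) ∧
      ∫ x, Real.sqrt x ^ k ∂(expMeasure (1/2)) =
        2 ^ ((k : ℝ)/2) * Real.Gamma ((k : ℝ)/2 + 1) := by
  have hb : (0:ℝ) < 2⁻¹ := by norm_num
  have hpm : Measurable (gammaPDFReal 1 (1/2)) := measurable_gammaPDFReal 1 (1/2)
  have hp0 : ∀ x, 0 ≤ gammaPDFReal 1 (1/2) x := gammaPDFReal_nonneg one_pos (by norm_num)
  have hmeas : expMeasure (1/2) =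
      (volume : Measure ℝ).withDensity fun x => ENNReal.ofReal (gammaPDFReal 1 (1/2) x) := rfl
  have key : EqOn (fun x => gammaPDFReal 1 (1/2) x * Real.sqrt x ^ k)
      (fun x => 2⁻¹ * (x ^ ((k:ℝ)/2) * Real.exp (-(2⁻¹ * x)))) (Ioi 0) := by
    intro x hx
    have hx0 : (0:ℝ) ≤ x := le_of_lt hx
    have hs : Real.sqrt x ^ k = x ^ ((k:ℝ)/2) := by
      rw [Real.sqrt_eq_rpow, ← Real.rpow_natCast (x ^ (1/(2:ℝ))) k, ← Real.rpow_mul hx0]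
      norm_num
      ring_nf
    simp only [exp_pdf_eq, if_pos hx0, hs]
    ring
  have hIoi : IntegrableOn (fun x => x ^ ((k:ℝ)/2) * Real.exp (-(2⁻¹ * x))) (Ioi 0) := by
    have h := integrableOn_rpow_mul_exp_neg_mul_rpow (p := 1) (s := (k:ℝ)/2) (b := 2⁻¹)
      ((by norm_num : (-1:ℝ) < 0).trans_le (by positivity : (0:ℝ) ≤ (k:ℝ)/2)) one_pos hb
    simpa [Real.rpow_one, neg_mul] using h
  have hGIoi : IntegrableOn (fun x => gammaPDFReal 1 (1/2) x * Real.sqrt x ^ k) (Ioi 0) :=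
    (integrableOn_congr_fun key measurableSet_Ioi).mpr (hIoi.const_mul 2⁻¹)
  have hGIio : IntegrableOn (fun x => gammaPDFReal 1 (1/2) x * Real.sqrt x ^ k) (Iio 0) := by
    refine (integrableOn_congr_fun (g := fun _ : ℝ => (0:ℝ)) (fun x hx => ?_) measurableSet_Iio).mpr
      integrableOn_zero
    show gammaPDFReal 1 (1/2) x * Real.sqrt x ^ k = 0
    rw [exp_pdf_eq, if_neg (not_le.mpr (mem_Iio.mp hx))]; ring
  have hGint : Integrable (fun x => gammaPDFReal 1 (1/2) x * Real.sqrt x ^ k) := by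
    rw [← integrableOn_univ, ← Set.Iio_union_Ici (a := (0:ℝ))]
    exact hGIio.union (Iff.mpr integrableOn_Ici_iff_integrableOn_Ioi hGIoi)
  refine ⟨by rw [hmeas]; exact integrable_withDensity_ofReal hpm hp0 hGint, ?_⟩
  rw [hmeas, integral_withDensity_ofReal hpm hp0]
  rw [← intervalIntegral.integral_Iio_add_Ici (b := (0:ℝ)) hGIio (Iff.mpr integrableOn_Ici_iff_integrableOn_Ioi hGIoi)]
  have e0 : ∫ x in Iio (0:ℝ), gammaPDFReal 1 (1/2) x * Real.sqrt x ^ k = 0 := by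
    rw [setIntegral_congr_fun measurableSet_Iio (g := fun _ : ℝ => (0:ℝ))
      (fun x hx => by
      show gammaPDFReal 1 (1/2) x * Real.sqrt x ^ k = 0
      rw [exp_pdf_eq, if_neg (not_le.mpr (mem_Iio.mp hx))]; ring)]
    simp
  rw [e0, zero_add, integral_Ici_eq_integral_Ioi,
    setIntegral_congr_fun measurableSet_Ioi key, integral_const_mul]
  have hval := integral_rpow_mul_exp_neg_mul_Ioi (a := (k:ℝ)/2 + 1) (r := 2⁻¹)
    (by positivity) hb
  simp_rw [show (k:ℝ)/2 + 1 - 1 = (k:ℝ)/2 by ring] at hval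
  rw [hval, show ((1:ℝ)/2⁻¹) = 2 by norm_num, Real.rpow_add two_pos, Real.rpow_one]
  ring

lemma gauss_pdf_eq (x : ℝ) :
    gaussianPDFReal 0 1 x = (Real.sqrt (2 * π))⁻¹ * Real.exp (-(2⁻¹ * x^2)) := by
  simp only [gaussianPDFReal, NNReal.coe_one, mul_one, sub_zero]
  congr 1
  ring

lemma gauss_int (n : ℕ) : Integrable (fun x : ℝ => x ^ n * Real.exp (-(2⁻¹ * x ^ 2))) := by
  have h := integrable_rpow_mul_exp_neg_mul_sq (b := 2⁻¹) (by norm_num) (s := (n:ℝ))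
    ((by norm_num : (-1:ℝ) < 0).trans_le (by positivity))
  simpa [Real.rpow_natCast, neg_mul] using h

lemma two_rpow_eq (x : ℝ) : x ^ (2:ℝ) = x ^ (2:ℕ) := by
  rw [show (2:ℝ) = ((2:ℕ):ℝ) by norm_num, Real.rpow_natCast]

lemma gauss_Ioi (n : ℕ) :
    ∫ x in Ioi (0:ℝ), x ^ n * Real.exp (-(2⁻¹ * x ^ 2)) =
      (2⁻¹:ℝ) ^ (-((n:ℝ) + 1) / 2) * (1 / 2) * Real.Gamma (((n:ℝ) + 1) / 2) := by
  have h := integral_rpow_mul_exp_neg_mul_rpow (p := 2) (q := (n:ℝ)) (b := 2⁻¹)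
    two_pos ((by norm_num : (-1:ℝ) < 0).trans_le (by positivity)) (by norm_num)
  rw [← h]
  refine setIntegral_congr_fun measurableSet_Ioi fun x hx => ?_
  rw [Real.rpow_natCast, two_rpow_eq]
  ring_nf

lemma gauss_Iic (n : ℕ) :
    ∫ x in Iic (0:ℝ), x ^ n * Real.exp (-(2⁻¹ * x ^ 2)) =
      (-1:ℝ) ^ n * ∫ x in Ioi (0:ℝ), x ^ n * Real.exp (-(2⁻¹ * x ^ 2)) := by
  have hpt : ∀ x:ℝ, (-x) ^ n * Real.exp (-(2⁻¹ * (-x) ^ 2)) =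
      (-1:ℝ)^n * (x ^ n * Real.exp (-(2⁻¹ * x^2))) := by
    intro x; rw [neg_pow, neg_sq]; ring
  calc ∫ x in Iic (0:ℝ), x ^ n * Real.exp (-(2⁻¹ * x ^ 2))
      = ∫ x in Iic (-(0:ℝ)), x ^ n * Real.exp (-(2⁻¹ * x ^ 2)) := by norm_num
    _ = ∫ x in Ioi (0:ℝ), (-x) ^ n * Real.exp (-(2⁻¹ * (-x) ^ 2)) :=
        (integral_comp_neg_Ioi 0 (fun x => x ^ n * Real.exp (-(2⁻¹ * x ^ 2)))).symm
    _ = ∫ x in Ioi (0:ℝ), (-1:ℝ)^n * (x ^ n * Real.exp (-(2⁻¹ * x ^ 2))) := by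
        exact setIntegral_congr_fun measurableSet_Ioi fun x _ => hpt x
    _ = (-1:ℝ) ^ n * ∫ x in Ioi (0:ℝ), x ^ n * Real.exp (-(2⁻¹ * x ^ 2)) :=
        integral_const_mul _ _

lemma gauss_full (n : ℕ) :
    ∫ x : ℝ, x ^ n * Real.exp (-(2⁻¹ * x ^ 2)) =
      ((-1:ℝ) ^ n + 1) * ∫ x in Ioi (0:ℝ), x ^ n * Real.exp (-(2⁻¹ * x ^ 2)) := by
  rw [← intervalIntegral.integral_Iic_add_Ioi (b := (0:ℝ)) (gauss_int n).integrableOn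
    (gauss_int n).integrableOn, gauss_Iic]
  ring

lemma gauss_measure_eq :
    gaussianReal 0 1 = (volume : Measure ℝ).withDensity
      fun x => ENNReal.ofReal (gaussianPDFReal 0 1 x) := by
  rw [gaussianReal_of_var_ne_zero 0 one_ne_zero]; rfl

lemma gauss_moment (n : ℕ) (v : ℝ)
    (hv : (Real.sqrt (2*π))⁻¹ * (((-1:ℝ)^n + 1) *
      ((2⁻¹:ℝ) ^ (-((n:ℝ) + 1) / 2) * (1 / 2) * Real.Gamma (((n:ℝ) + 1) / 2))) = v) :
    Integrable (fun x => x ^ n) (gaussianReal 0 1) ∧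
      ∫ x, x ^ n ∂(gaussianReal 0 1) = v := by
  have hpm : Measurable (gaussianPDFReal 0 1) := measurable_gaussianPDFReal 0 1
  have hp0 : ∀ x, 0 ≤ gaussianPDFReal 0 1 x := gaussianPDFReal_nonneg 0 1
  have hpt : ∀ x : ℝ, gaussianPDFReal 0 1 x * x ^ n
      = (Real.sqrt (2*π))⁻¹ * (x ^ n * Real.exp (-(2⁻¹ * x ^ 2))) := by
    intro x; rw [gauss_pdf_eq]; ring
  have hint : Integrable (fun x => gaussianPDFReal 0 1 x * x ^ n) :=
    ((gauss_int n).const_mul _).congr (Filter.Eventually.of_forall fun x => (hpt x).symm)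
  constructor
  · rw [gauss_measure_eq]; exact integrable_withDensity_ofReal hpm hp0 hint
  · rw [gauss_measure_eq, integral_withDensity_ofReal hpm hp0]
    calc ∫ x : ℝ, gaussianPDFReal 0 1 x * x ^ n
        = ∫ x : ℝ, (Real.sqrt (2*π))⁻¹ * (x ^ n * Real.exp (-(2⁻¹ * x ^ 2))) :=
          integral_congr_ae (Filter.Eventually.of_forall hpt)
      _ = (Real.sqrt (2*π))⁻¹ * ∫ x : ℝ, x ^ n * Real.exp (-(2⁻¹ * x ^ 2)) :=
          integral_const_mul _ _
      _ = v := by rw [gauss_full, gauss_Ioi]; exact hv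

lemma inv_two_rpow (y : ℝ) : (2⁻¹:ℝ) ^ (-y) = (2:ℝ) ^ y := by
  rw [Real.inv_rpow (by norm_num : (0:ℝ) ≤ 2), Real.rpow_neg (by norm_num), inv_inv]

lemma two_rpow_half : (2:ℝ) ^ ((2:ℝ)⁻¹) = Real.sqrt 2 := by
  rw [Real.sqrt_eq_rpow]; norm_num

lemma Gamma_three_half : Real.Gamma ((3:ℝ)/2) = Real.sqrt π / 2 := by
  rw [show (3:ℝ)/2 = 1/2 + 1 by norm_num, Real.Gamma_add_one (by norm_num),
    Real.Gamma_one_half_eq]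
  ring

lemma sqrt_two_pi : Real.sqrt (2*π) = Real.sqrt 2 * Real.sqrt π :=
  Real.sqrt_mul (by norm_num) π

lemma gm1 : Integrable (fun x : ℝ => x ^ 1) (gaussianReal 0 1) ∧
    ∫ x, x ^ 1 ∂(gaussianReal 0 1) = 0 := gauss_moment 1 0 (by norm_num)

lemma gm3 : Integrable (fun x : ℝ => x ^ 3) (gaussianReal 0 1) ∧
    ∫ x, x ^ 3 ∂(gaussianReal 0 1) = 0 := gauss_moment 3 0 (by norm_num)

lemma gm2 : Integrable (fun x : ℝ => x ^ 2) (gaussianReal 0 1) ∧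
    ∫ x, x ^ 2 ∂(gaussianReal 0 1) = 1 := by
  refine gauss_moment 2 1 ?_
  have e1 : -(((2:ℕ):ℝ) + 1) / 2 = -((1:ℝ) + (2:ℝ)⁻¹) := by norm_num
  have e2 : (((2:ℕ):ℝ) + 1) / 2 = (3:ℝ)/2 := by norm_num
  rw [e1, e2, inv_two_rpow, Gamma_three_half, Real.rpow_add two_pos, Real.rpow_one,
    two_rpow_half, sqrt_two_pi]
  have h2 : Real.sqrt 2 ≠ 0 := by positivity
  have hπ : Real.sqrt π ≠ 0 := by positivity
  field_simp
  norm_num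

lemma gm4 : Integrable (fun x : ℝ => x ^ 4) (gaussianReal 0 1) ∧
    ∫ x, x ^ 4 ∂(gaussianReal 0 1) = 3 := by
  refine gauss_moment 4 3 ?_
  have e1 : -(((4:ℕ):ℝ) + 1) / 2 = -((2:ℝ) + (2:ℝ)⁻¹) := by norm_num
  have e2 : (((4:ℕ):ℝ) + 1) / 2 = (5:ℝ)/2 := by norm_num
  have eΓ : Real.Gamma ((5:ℝ)/2) = 3/2 * (Real.sqrt π / 2) := by
    rw [show (5:ℝ)/2 = 3/2 + 1 by norm_num, Real.Gamma_add_one (by norm_num), Gamma_three_half]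
  have e4 : (2:ℝ) ^ ((2:ℝ)) = 4 := by rw [two_rpow_eq]; norm_num
  rw [e1, e2, inv_two_rpow, eΓ, Real.rpow_add two_pos, e4, two_rpow_half, sqrt_two_pi]
  have h2 : Real.sqrt 2 ≠ 0 := by positivity
  have hπ : Real.sqrt π ≠ 0 := by positivity
  field_simp
  ring

lemma gm0 : Integrable (fun x : ℝ => (1:ℝ)) (gaussianReal 0 1) ∧
    ∫ x, (1:ℝ) ∂(gaussianReal 0 1) = 1 := by
  constructor
  · exact integrable_const 1
  · simp

end ExpPropAux

/-- Let r ∼ Exp(rate 1/2) (mean 2), g₁, g₂ ∼ N(0,1), all independent,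
0 < ρ < 1, ρ̄ = √(1−ρ²), and r* = (ρ√r + ρ̄g₁)² + (ρ̄g₂)². Then
E[r*] = E[r] = 2 and Var(r*) = Var(r) = 4. -/
theorem exponential_proposal_moments
    {Ω : Type*} [MeasurableSpace Ω] (μ : Measure Ω) [IsProbabilityMeasure μ]
    (r g₁ g₂ : Ω → ℝ) (hrm : Measurable r) (h₁m : Measurable g₁) (h₂m : Measurable g₂)
    (hr : Measure.map r μ = expMeasure (1 / 2))
    (h₁ : Measure.map g₁ μ = gaussianReal 0 1)
    (h₂ : Measure.map g₂ μ = gaussianReal 0 1)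
    (hindep : iIndepFun ![r, g₁, g₂] μ)
    (ρ : ℝ) (hρ : 0 < ρ) (hρ1 : ρ < 1) :
    (∫ ω, ((ρ * Real.sqrt (r ω) + Real.sqrt (1 - ρ ^ 2) * g₁ ω) ^ 2 +
        (Real.sqrt (1 - ρ ^ 2) * g₂ ω) ^ 2) ∂μ = ∫ ω, r ω ∂μ) ∧
    (∫ ω, r ω ∂μ = 2) ∧
    (variance (fun ω => (ρ * Real.sqrt (r ω) + Real.sqrt (1 - ρ ^ 2) * g₁ ω) ^ 2 +
        (Real.sqrt (1 - ρ ^ 2) * g₂ ω) ^ 2) μ = variance r μ) ∧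
    (variance r μ = 4) := by
  set c := Real.sqrt (1 - ρ ^ 2) with hc
  have hc0 : (0:ℝ) ≤ 1 - ρ ^ 2 := by nlinarith
  have hc2 : c ^ 2 = 1 - ρ ^ 2 := Real.sq_sqrt hc0
  -- measurability helpers
  have hsqk : ∀ k : ℕ, Measurable fun x : ℝ => Real.sqrt x ^ k :=
    fun k => (measurable_id.sqrt).pow_const k
  have pow_meas : ∀ n : ℕ, Measurable fun x : ℝ => x ^ n :=
    fun n => measurable_id.pow_const n
  -- transfer along maps
  have HR : ∀ (φ : ℝ → ℝ), Measurable φ →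
      (Integrable φ (expMeasure (1/2)) → Integrable (fun ω => φ (r ω)) μ) ∧
      ∫ ω, φ (r ω) ∂μ = ∫ x, φ x ∂(expMeasure (1/2)) := by
    intro φ hφ
    constructor
    · intro h
      exact (integrable_map_measure hφ.aestronglyMeasurable hrm.aemeasurable).mp
        (by rw [hr]; exact h)
    · rw [← hr]
      exact (integral_map hrm.aemeasurable hφ.aestronglyMeasurable).symm
  have HG : ∀ (g : Ω → ℝ), Measurable g → Measure.map g μ = gaussianReal 0 1 →
      ∀ (φ : ℝ → ℝ), Measurable φ →
      (Integrable φ (gaussianReal 0 1) → Integrable (fun ω => φ (g ω)) μ) ∧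
      ∫ ω, φ (g ω) ∂μ = ∫ x, φ x ∂(gaussianReal 0 1) := by
    intro g hgm hg φ hφ
    constructor
    · intro h
      exact (integrable_map_measure hφ.aestronglyMeasurable hgm.aemeasurable).mp
        (by rw [hg]; exact h)
    · rw [← hg]
      exact (integral_map hgm.aemeasurable hφ.aestronglyMeasurable).symm
  -- moments of r
  have iS : ∀ k : ℕ, Integrable (fun ω => Real.sqrt (r ω) ^ k) μ :=
    fun k => (HR _ (hsqk k)).1 (exp_sqrt_moment k).1
  have eS : ∀ k : ℕ, ∫ ω, Real.sqrt (r ω) ^ k ∂μ =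
      2 ^ ((k : ℝ)/2) * Real.Gamma ((k : ℝ)/2 + 1) :=
    fun k => ((HR _ (hsqk k)).2).trans (exp_sqrt_moment k).2
  have eS2 : ∫ ω, Real.sqrt (r ω) ^ 2 ∂μ = 2 := by
    rw [eS 2, show ((2:ℕ):ℝ)/2 = 1 by norm_num, Real.rpow_one,
      show (1:ℝ) + 1 = 2 by norm_num, Real.Gamma_two]
    norm_num
  have eS4 : ∫ ω, Real.sqrt (r ω) ^ 4 ∂μ = 8 := by
    rw [eS 4, show ((4:ℕ):ℝ)/2 = 2 by norm_num, two_rpow_eq,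
      show (2:ℝ) + 1 = ((2:ℕ):ℝ) + 1 by norm_num, Real.Gamma_nat_eq_factorial]
    norm_num [Nat.factorial]
  have iS1 : Integrable (fun ω => Real.sqrt (r ω)) μ := by
    have := iS 1; simpa using this
  -- moments of g₁, g₂
  have iG1 : Integrable g₁ μ := by
    have := (HG g₁ h₁m h₁ _ (pow_meas 1)).1 gm1.1; simpa using this
  have eG1 : ∫ ω, g₁ ω ∂μ = 0 := by
    have := ((HG g₁ h₁m h₁ _ (pow_meas 1)).2).trans gm1.2; simpa using this
  have iG2 : Integrable (fun ω => g₁ ω ^ 2) μ := (HG g₁ h₁m h₁ _ (pow_meas 2)).1 gm2.1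
  have eG2 : ∫ ω, g₁ ω ^ 2 ∂μ = 1 := ((HG g₁ h₁m h₁ _ (pow_meas 2)).2).trans gm2.2
  have iG3 : Integrable (fun ω => g₁ ω ^ 3) μ := (HG g₁ h₁m h₁ _ (pow_meas 3)).1 gm3.1
  have eG3 : ∫ ω, g₁ ω ^ 3 ∂μ = 0 := ((HG g₁ h₁m h₁ _ (pow_meas 3)).2).trans gm3.2
  have iG4 : Integrable (fun ω => g₁ ω ^ 4) μ := (HG g₁ h₁m h₁ _ (pow_meas 4)).1 gm4.1
  have eG4 : ∫ ω, g₁ ω ^ 4 ∂μ = 3 := ((HG g₁ h₁m h₁ _ (pow_meas 4)).2).trans gm4.2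
  have iH2 : Integrable (fun ω => g₂ ω ^ 2) μ := (HG g₂ h₂m h₂ _ (pow_meas 2)).1 gm2.1
  have eH2 : ∫ ω, g₂ ω ^ 2 ∂μ = 1 := ((HG g₂ h₂m h₂ _ (pow_meas 2)).2).trans gm2.2
  have iH4 : Integrable (fun ω => g₂ ω ^ 4) μ := (HG g₂ h₂m h₂ _ (pow_meas 4)).1 gm4.1
  have eH4 : ∫ ω, g₂ ω ^ 4 ∂μ = 3 := ((HG g₂ h₂m h₂ _ (pow_meas 4)).2).trans gm4.2
  -- independence
  have hFm : ∀ i, Measurable (![r, g₁, g₂] i) := by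
    intro i; fin_cases i
    · exact hrm
    · exact h₁m
    · exact h₂m
  have hI01 : IndepFun r g₁ μ := by
    simpa using hindep.indepFun (show (0 : Fin 3) ≠ 1 by decide)
  have hI02 : IndepFun r g₂ μ := by
    simpa using hindep.indepFun (show (0 : Fin 3) ≠ 2 by decide)
  have hI12 : IndepFun g₁ g₂ μ := by
    simpa using hindep.indepFun (show (1 : Fin 3) ≠ 2 by decide)
  have hIpair : IndepFun (fun ω => (r ω, g₁ ω)) g₂ μ := by
    simpa using hindep.indepFun_prodMk hFm 0 1 2 (by decide) (by decide)
  -- product integrability and expectations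
  have dSG : IndepFun (fun ω => Real.sqrt (r ω)) g₁ μ :=
    hI01.comp measurable_id.sqrt measurable_id
  have iSG : Integrable (fun ω => Real.sqrt (r ω) * g₁ ω) μ :=
    dSG.integrable_mul iS1 iG1
  have eSG : ∫ ω, Real.sqrt (r ω) * g₁ ω ∂μ = 0 := by
    have h : ∫ ω, Real.sqrt (r ω) * g₁ ω ∂μ
        = (∫ ω, Real.sqrt (r ω) ∂μ) * ∫ ω, g₁ ω ∂μ :=
      dSG.integral_fun_mul_eq_mul_integral iS1.1 iG1.1
    rw [h, eG1, mul_zero]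
  have dS3G : IndepFun (fun ω => Real.sqrt (r ω) ^ 3) g₁ μ :=
    hI01.comp (hsqk 3) measurable_id
  have iS3G : Integrable (fun ω => Real.sqrt (r ω) ^ 3 * g₁ ω) μ :=
    dS3G.integrable_mul (iS 3) iG1
  have eS3G : ∫ ω, Real.sqrt (r ω) ^ 3 * g₁ ω ∂μ = 0 := by
    have h : ∫ ω, Real.sqrt (r ω) ^ 3 * g₁ ω ∂μ
        = (∫ ω, Real.sqrt (r ω) ^ 3 ∂μ) * ∫ ω, g₁ ω ∂μ :=
      dS3G.integral_fun_mul_eq_mul_integral (iS 3).1 iG1.1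
    rw [h, eG1, mul_zero]
  have dS2G2 : IndepFun (fun ω => Real.sqrt (r ω) ^ 2) (fun ω => g₁ ω ^ 2) μ :=
    hI01.comp (hsqk 2) (pow_meas 2)
  have iS2G2 : Integrable (fun ω => Real.sqrt (r ω) ^ 2 * g₁ ω ^ 2) μ :=
    dS2G2.integrable_mul (iS 2) iG2
  have eS2G2 : ∫ ω, Real.sqrt (r ω) ^ 2 * g₁ ω ^ 2 ∂μ = 2 := by
    have h : ∫ ω, Real.sqrt (r ω) ^ 2 * g₁ ω ^ 2 ∂μ
        = (∫ ω, Real.sqrt (r ω) ^ 2 ∂μ) * ∫ ω, g₁ ω ^ 2 ∂μ :=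
      dS2G2.integral_fun_mul_eq_mul_integral (iS 2).1 iG2.1
    rw [h, eS2, eG2]; norm_num
  have dSG3 : IndepFun (fun ω => Real.sqrt (r ω)) (fun ω => g₁ ω ^ 3) μ :=
    hI01.comp measurable_id.sqrt (pow_meas 3)
  have iSG3 : Integrable (fun ω => Real.sqrt (r ω) * g₁ ω ^ 3) μ :=
    dSG3.integrable_mul iS1 iG3
  have eSG3 : ∫ ω, Real.sqrt (r ω) * g₁ ω ^ 3 ∂μ = 0 := by
    have h : ∫ ω, Real.sqrt (r ω) * g₁ ω ^ 3 ∂μ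
        = (∫ ω, Real.sqrt (r ω) ∂μ) * ∫ ω, g₁ ω ^ 3 ∂μ :=
      dSG3.integral_fun_mul_eq_mul_integral iS1.1 iG3.1
    rw [h, eG3, mul_zero]
  have dS2H2 : IndepFun (fun ω => Real.sqrt (r ω) ^ 2) (fun ω => g₂ ω ^ 2) μ :=
    hI02.comp (hsqk 2) (pow_meas 2)
  have iS2H2 : Integrable (fun ω => Real.sqrt (r ω) ^ 2 * g₂ ω ^ 2) μ :=
    dS2H2.integrable_mul (iS 2) iH2
  have eS2H2 : ∫ ω, Real.sqrt (r ω) ^ 2 * g₂ ω ^ 2 ∂μ = 2 := by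
    have h : ∫ ω, Real.sqrt (r ω) ^ 2 * g₂ ω ^ 2 ∂μ
        = (∫ ω, Real.sqrt (r ω) ^ 2 ∂μ) * ∫ ω, g₂ ω ^ 2 ∂μ :=
      dS2H2.integral_fun_mul_eq_mul_integral (iS 2).1 iH2.1
    rw [h, eS2, eH2]; norm_num
  have dG2H2 : IndepFun (fun ω => g₁ ω ^ 2) (fun ω => g₂ ω ^ 2) μ :=
    hI12.comp (pow_meas 2) (pow_meas 2)
  have iG2H2 : Integrable (fun ω => g₁ ω ^ 2 * g₂ ω ^ 2) μ :=
    dG2H2.integrable_mul iG2 iH2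
  have eG2H2 : ∫ ω, g₁ ω ^ 2 * g₂ ω ^ 2 ∂μ = 1 := by
    have h : ∫ ω, g₁ ω ^ 2 * g₂ ω ^ 2 ∂μ
        = (∫ ω, g₁ ω ^ 2 ∂μ) * ∫ ω, g₂ ω ^ 2 ∂μ :=
      dG2H2.integral_fun_mul_eq_mul_integral iG2.1 iH2.1
    rw [h, eG2, eH2]; norm_num
  have dP : IndepFun (fun ω => Real.sqrt (r ω) * g₁ ω) (fun ω => g₂ ω ^ 2) μ :=
    hIpair.comp ((measurable_fst.sqrt).mul measurable_snd) (pow_meas 2)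
  have iSGH2 : Integrable (fun ω => Real.sqrt (r ω) * g₁ ω * g₂ ω ^ 2) μ :=
    dP.integrable_mul iSG iH2
  have eSGH2 : ∫ ω, Real.sqrt (r ω) * g₁ ω * g₂ ω ^ 2 ∂μ = 0 := by
    have h : ∫ ω, Real.sqrt (r ω) * g₁ ω * g₂ ω ^ 2 ∂μ
        = (∫ ω, Real.sqrt (r ω) * g₁ ω ∂μ) * ∫ ω, g₂ ω ^ 2 ∂μ :=
      dP.integral_fun_mul_eq_mul_integral iSG.1 iH2.1
    rw [h, eSG, zero_mul]
  -- a.e. nonnegativity of r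
  have h0 : μ {ω | r ω < 0} = 0 := by
    have hm : μ (r ⁻¹' Iio 0) = (expMeasure (1/2)) (Iio 0) := by
      rw [← hr, Measure.map_apply hrm measurableSet_Iio]
    have he : (expMeasure (1/2)) (Iio 0) = 0 := by
      have : expMeasure (1/2) = (volume : Measure ℝ).withDensity (gammaPDF 1 (1/2)) := rfl
      rw [this, withDensity_apply _ measurableSet_Iio]
      exact lintegral_gammaPDF_of_nonpos le_rfl
    rw [show {ω | r ω < 0} = r ⁻¹' Iio 0 from rfl, hm, he]
  have haer : ∀ᵐ ω ∂μ, 0 ≤ r ω := by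
    rw [ae_iff]; simpa only [not_le] using h0
  -- first moment
  have hpt : ∀ ω, (ρ * Real.sqrt (r ω) + c * g₁ ω) ^ 2 + (c * g₂ ω) ^ 2
      = ρ^2 * Real.sqrt (r ω) ^ 2 + (2*ρ*c) * (Real.sqrt (r ω) * g₁ ω)
        + c^2 * g₁ ω ^ 2 + c^2 * g₂ ω ^ 2 := fun ω => by ring
  have iA : Integrable (fun ω => ρ^2 * Real.sqrt (r ω) ^ 2) μ := (iS 2).const_mul _
  have iB : Integrable (fun ω => (2*ρ*c) * (Real.sqrt (r ω) * g₁ ω)) μ := iSG.const_mul _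
  have iC : Integrable (fun ω => c^2 * g₁ ω ^ 2) μ := iG2.const_mul _
  have iD : Integrable (fun ω => c^2 * g₂ ω ^ 2) μ := iH2.const_mul _
  have hEX : ∫ ω, ((ρ * Real.sqrt (r ω) + c * g₁ ω) ^ 2 + (c * g₂ ω) ^ 2) ∂μ = 2 := by
    have iAB : Integrable (fun ω => ρ^2 * Real.sqrt (r ω) ^ 2
        + (2*ρ*c) * (Real.sqrt (r ω) * g₁ ω)) μ := iA.add iB
    have iABC : Integrable (fun ω => ρ^2 * Real.sqrt (r ω) ^ 2
        + (2*ρ*c) * (Real.sqrt (r ω) * g₁ ω) + c^2 * g₁ ω ^ 2) μ := iAB.add iC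
    rw [integral_congr_ae (Filter.Eventually.of_forall hpt),
      integral_add iABC iD, integral_add iAB iC, integral_add iA iB,
      integral_const_mul, integral_const_mul, integral_const_mul, integral_const_mul,
      eS2, eSG, eG2, eH2]
    linear_combination 2 * hc2
  have hEr : ∫ ω, r ω ∂μ = 2 := by
    have h : ∫ ω, r ω ∂μ = ∫ ω, Real.sqrt (r ω) ^ 2 ∂μ :=
      integral_congr_ae (haer.mono fun ω h => (Real.sq_sqrt h).symm)
    rw [h, eS2]
  -- second moment
  have hpt2 : ∀ ω, (((ρ * Real.sqrt (r ω) + c * g₁ ω) ^ 2 + (c * g₂ ω) ^ 2)) ^ 2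
      = ρ^4 * Real.sqrt (r ω) ^ 4
        + (4*ρ^3*c) * (Real.sqrt (r ω) ^ 3 * g₁ ω)
        + (6*ρ^2*c^2) * (Real.sqrt (r ω) ^ 2 * g₁ ω ^ 2)
        + (4*ρ*c^3) * (Real.sqrt (r ω) * g₁ ω ^ 3)
        + c^4 * g₁ ω ^ 4
        + (2*ρ^2*c^2) * (Real.sqrt (r ω) ^ 2 * g₂ ω ^ 2)
        + (4*ρ*c^3) * (Real.sqrt (r ω) * g₁ ω * g₂ ω ^ 2)
        + (2*c^4) * (g₁ ω ^ 2 * g₂ ω ^ 2)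
        + c^4 * g₂ ω ^ 4 := fun ω => by ring
  have I1 : Integrable (fun ω => ρ^4 * Real.sqrt (r ω) ^ 4) μ := (iS 4).const_mul _
  have I2 : Integrable (fun ω => (4*ρ^3*c) * (Real.sqrt (r ω) ^ 3 * g₁ ω)) μ :=
    iS3G.const_mul _
  have I3 : Integrable (fun ω => (6*ρ^2*c^2) * (Real.sqrt (r ω) ^ 2 * g₁ ω ^ 2)) μ :=
    iS2G2.const_mul _
  have I4 : Integrable (fun ω => (4*ρ*c^3) * (Real.sqrt (r ω) * g₁ ω ^ 3)) μ :=
    iSG3.const_mul _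
  have I5 : Integrable (fun ω => c^4 * g₁ ω ^ 4) μ := iG4.const_mul _
  have I6 : Integrable (fun ω => (2*ρ^2*c^2) * (Real.sqrt (r ω) ^ 2 * g₂ ω ^ 2)) μ :=
    iS2H2.const_mul _
  have I7 : Integrable (fun ω => (4*ρ*c^3) * (Real.sqrt (r ω) * g₁ ω * g₂ ω ^ 2)) μ :=
    iSGH2.const_mul _
  have I8 : Integrable (fun ω => (2*c^4) * (g₁ ω ^ 2 * g₂ ω ^ 2)) μ := iG2H2.const_mul _
  have I9 : Integrable (fun ω => c^4 * g₂ ω ^ 4) μ := iH4.const_mul _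
  have hEX2 : ∫ ω, (((ρ * Real.sqrt (r ω) + c * g₁ ω) ^ 2 + (c * g₂ ω) ^ 2)) ^ 2 ∂μ = 8 := by
    have K2 : Integrable (fun ω => ρ^4 * Real.sqrt (r ω) ^ 4
        + (4*ρ^3*c) * (Real.sqrt (r ω) ^ 3 * g₁ ω)) μ := I1.add I2
    have K3 : Integrable (fun ω => ρ^4 * Real.sqrt (r ω) ^ 4
        + (4*ρ^3*c) * (Real.sqrt (r ω) ^ 3 * g₁ ω)
        + (6*ρ^2*c^2) * (Real.sqrt (r ω) ^ 2 * g₁ ω ^ 2)) μ := K2.add I3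
    have K4 : Integrable (fun ω => ρ^4 * Real.sqrt (r ω) ^ 4
        + (4*ρ^3*c) * (Real.sqrt (r ω) ^ 3 * g₁ ω)
        + (6*ρ^2*c^2) * (Real.sqrt (r ω) ^ 2 * g₁ ω ^ 2)
        + (4*ρ*c^3) * (Real.sqrt (r ω) * g₁ ω ^ 3)) μ := K3.add I4
    have K5 : Integrable (fun ω => ρ^4 * Real.sqrt (r ω) ^ 4
        + (4*ρ^3*c) * (Real.sqrt (r ω) ^ 3 * g₁ ω)
        + (6*ρ^2*c^2) * (Real.sqrt (r ω) ^ 2 * g₁ ω ^ 2)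
        + (4*ρ*c^3) * (Real.sqrt (r ω) * g₁ ω ^ 3)
        + c^4 * g₁ ω ^ 4) μ := K4.add I5
    have K6 : Integrable (fun ω => ρ^4 * Real.sqrt (r ω) ^ 4
        + (4*ρ^3*c) * (Real.sqrt (r ω) ^ 3 * g₁ ω)
        + (6*ρ^2*c^2) * (Real.sqrt (r ω) ^ 2 * g₁ ω ^ 2)
        + (4*ρ*c^3) * (Real.sqrt (r ω) * g₁ ω ^ 3)
        + c^4 * g₁ ω ^ 4
        + (2*ρ^2*c^2) * (Real.sqrt (r ω) ^ 2 * g₂ ω ^ 2)) μ := K5.add I6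
    have K7 : Integrable (fun ω => ρ^4 * Real.sqrt (r ω) ^ 4
        + (4*ρ^3*c) * (Real.sqrt (r ω) ^ 3 * g₁ ω)
        + (6*ρ^2*c^2) * (Real.sqrt (r ω) ^ 2 * g₁ ω ^ 2)
        + (4*ρ*c^3) * (Real.sqrt (r ω) * g₁ ω ^ 3)
        + c^4 * g₁ ω ^ 4
        + (2*ρ^2*c^2) * (Real.sqrt (r ω) ^ 2 * g₂ ω ^ 2)
        + (4*ρ*c^3) * (Real.sqrt (r ω) * g₁ ω * g₂ ω ^ 2)) μ := K6.add I7
    have K8 : Integrable (fun ω => ρ^4 * Real.sqrt (r ω) ^ 4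
        + (4*ρ^3*c) * (Real.sqrt (r ω) ^ 3 * g₁ ω)
        + (6*ρ^2*c^2) * (Real.sqrt (r ω) ^ 2 * g₁ ω ^ 2)
        + (4*ρ*c^3) * (Real.sqrt (r ω) * g₁ ω ^ 3)
        + c^4 * g₁ ω ^ 4
        + (2*ρ^2*c^2) * (Real.sqrt (r ω) ^ 2 * g₂ ω ^ 2)
        + (4*ρ*c^3) * (Real.sqrt (r ω) * g₁ ω * g₂ ω ^ 2)
        + (2*c^4) * (g₁ ω ^ 2 * g₂ ω ^ 2)) μ := K7.add I8
    rw [integral_congr_ae (Filter.Eventually.of_forall hpt2),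
      integral_add K8 I9, integral_add K7 I8, integral_add K6 I7, integral_add K5 I6,
      integral_add K4 I5, integral_add K3 I4, integral_add K2 I3, integral_add I1 I2,
      integral_const_mul, integral_const_mul, integral_const_mul, integral_const_mul,
      integral_const_mul, integral_const_mul, integral_const_mul, integral_const_mul,
      integral_const_mul,
      eS4, eS3G, eS2G2, eSG3, eG4, eS2H2, eSGH2, eG2H2, eH4]
    linear_combination (8*c^2 + 8*ρ^2 + 8) * hc2
  -- Memℒp and variance of X
  have mX : Measurable (fun ω => (ρ * Real.sqrt (r ω) + c * g₁ ω) ^ 2 + (c * g₂ ω) ^ 2) :=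
    (((hrm.sqrt.const_mul ρ).add (h₁m.const_mul c)).pow_const 2).add
      ((h₂m.const_mul c).pow_const 2)
  have iX2 : Integrable
      (fun ω => (((ρ * Real.sqrt (r ω) + c * g₁ ω) ^ 2 + (c * g₂ ω) ^ 2)) ^ 2) μ :=
    ((((((((I1.add I2).add I3).add I4).add I5).add I6).add I7).add I8).add I9).congr
      (Filter.Eventually.of_forall fun ω => (hpt2 ω).symm)
  have hMX : MemLp (fun ω => (ρ * Real.sqrt (r ω) + c * g₁ ω) ^ 2 + (c * g₂ ω) ^ 2) 2 μ :=
    (memLp_two_iff_integrable_sq mX.aestronglyMeasurable).mpr iX2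
  have hVX : variance (fun ω => (ρ * Real.sqrt (r ω) + c * g₁ ω) ^ 2 + (c * g₂ ω) ^ 2) μ
      = 4 := by
    rw [variance_eq_sub hMX]
    simp only [Pi.pow_apply]
    rw [hEX2, hEX]
    norm_num
  -- variance of r
  have iR2 : Integrable (fun ω => r ω ^ 2) μ :=
    (iS 4).congr (haer.mono fun ω h => by
      show Real.sqrt (r ω) ^ 4 = r ω ^ 2
      rw [show Real.sqrt (r ω) ^ 4 = (Real.sqrt (r ω) ^ 2) ^ 2 by ring, Real.sq_sqrt h])
  have eR2 : ∫ ω, r ω ^ 2 ∂μ = 8 := by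
    have h : ∫ ω, r ω ^ 2 ∂μ = ∫ ω, Real.sqrt (r ω) ^ 4 ∂μ :=
      integral_congr_ae (haer.mono fun ω h => by
        show r ω ^ 2 = Real.sqrt (r ω) ^ 4
        rw [show Real.sqrt (r ω) ^ 4 = (Real.sqrt (r ω) ^ 2) ^ 2 by ring, Real.sq_sqrt h])
    rw [h, eS4]
  have hMr : MemLp r 2 μ := (memLp_two_iff_integrable_sq hrm.aestronglyMeasurable).mpr iR2
  have hVr : variance r μ = 4 := by
    rw [variance_eq_sub hMr]
    simp only [Pi.pow_apply]
    rw [eR2, hEr]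
    norm_num
  exact ⟨hEX.trans hEr.symm, hEr, hVX.trans hVr.symm, hVr⟩
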